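/- In the algebra Ũ(χ), for i ≠ j in I and m ∈ Z≥0, [Ẽ^+_{m,α_i,α_j}, F̃^+_{m,α_i,α_j}] = (m)_{q_{ii}}! (m; q_{ii}, q_{ij}q_{ji})! ( -K̃_{mα_i+α_j} + L̃_{mα_i+α_j} ). -/

import Mathlib

/-- `ℤΠ`, the free `ℤ`-module with basis `Π = {α_1,…,α_N}`. -/
abbrev Mz (N : ℕ) := Fin N →₀ ℤ

/-- The simple root `α_i`. -/
noncomputable def alphav {N : ℕ} (i : Fin N) : Mz N := Finsupp.single i 1

/-- A bi-homomorphism `χ : ℤΠ × ℤΠ → ℂ*`. -/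
def IsBihom {N : ℕ} (χ : Mz N → Mz N → ℂˣ) : Prop :=
  (∀ a b c : Mz N, χ a (b + c) = χ a b * χ a c) ∧
  (∀ a b c : Mz N, χ (a + b) c = χ a c * χ b c)

/-- `(m)_t := 1 + t + ⋯ + t^{m-1}`. -/
noncomputable def qnum (m : ℕ) (t : ℂ) : ℂ := ∑ j ∈ Finset.range m, t ^ j

/-- `(m)_t! := ∏_{j=1}^m (j)_t`. -/
noncomputable def qfact (m : ℕ) (t : ℂ) : ℂ := ∏ j ∈ Finset.range m, qnum (j + 1) t

/-- `(m; t₁, t₂)! := ∏_{j=1}^m (1 - t₁^{j-1} t₂)`. -/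
noncomputable def tfact (m : ℕ) (t₁ t₂ : ℂ) : ℂ := ∏ j ∈ Finset.range m, (1 - t₁ ^ j * t₂)

/-- Generators of the algebra `Ũ(χ)`: `K̃_α, L̃_α (α ∈ ℤΠ)`, `Ẽ_i, F̃_i (i ∈ I)`. -/
inductive Gen (N : ℕ)
  | K : Mz N → Gen N
  | L : Mz N → Gen N
  | E : Fin N → Gen N
  | F : Fin N → Gen N

/-- The free `ℂ`-algebra on the generators. -/
abbrev FA (N : ℕ) := FreeAlgebra ℂ (Gen N)

/-- Embedding of a generator into the free algebra. -/
noncomputable def gen {N : ℕ} (x : Gen N) : FA N := FreeAlgebra.ι ℂ x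

/-- The defining relations of `Ũ(χ)`. -/
inductive URel {N : ℕ} (χ : Mz N → Mz N → ℂˣ) : FA N → FA N → Prop
  | K0 : URel χ (gen (Gen.K 0)) 1
  | L0 : URel χ (gen (Gen.L 0)) 1
  | KK (a b : Mz N) : URel χ (gen (Gen.K a) * gen (Gen.K b)) (gen (Gen.K (a + b)))
  | LL (a b : Mz N) : URel χ (gen (Gen.L a) * gen (Gen.L b)) (gen (Gen.L (a + b)))
  | KL (a b : Mz N) : URel χ (gen (Gen.K a) * gen (Gen.L b)) (gen (Gen.L b) * gen (Gen.K a))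
  | KE (a : Mz N) (i : Fin N) : URel χ (gen (Gen.K a) * gen (Gen.E i))
      ((χ a (alphav i) : ℂ) • (gen (Gen.E i) * gen (Gen.K a)))
  | LE (a : Mz N) (i : Fin N) : URel χ (gen (Gen.L a) * gen (Gen.E i))
      ((χ (-alphav i) a : ℂ) • (gen (Gen.E i) * gen (Gen.L a)))
  | KF (a : Mz N) (i : Fin N) : URel χ (gen (Gen.K a) * gen (Gen.F i))
      ((χ a (-alphav i) : ℂ) • (gen (Gen.F i) * gen (Gen.K a)))
  | LF (a : Mz N) (i : Fin N) : URel χ (gen (Gen.L a) * gen (Gen.F i))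
      ((χ (alphav i) a : ℂ) • (gen (Gen.F i) * gen (Gen.L a)))
  | EF (i j : Fin N) : URel χ (gen (Gen.E i) * gen (Gen.F j) - gen (Gen.F j) * gen (Gen.E i))
      (if i = j then -gen (Gen.K (alphav i)) + gen (Gen.L (alphav i)) else 0)

/-- The algebra `Ũ(χ)`. -/
abbrev tU {N : ℕ} (χ : Mz N → Mz N → ℂˣ) := RingQuot (URel χ)

/-- `K̃_α` in `Ũ(χ)`. -/
noncomputable def elK {N : ℕ} (χ : Mz N → Mz N → ℂˣ) (a : Mz N) : tU χ :=
  RingQuot.mkAlgHom ℂ (URel χ) (gen (Gen.K a))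

/-- `L̃_α` in `Ũ(χ)`. -/
noncomputable def elL {N : ℕ} (χ : Mz N → Mz N → ℂˣ) (a : Mz N) : tU χ :=
  RingQuot.mkAlgHom ℂ (URel χ) (gen (Gen.L a))

/-- `Ẽ_i` in `Ũ(χ)`. -/
noncomputable def elE {N : ℕ} (χ : Mz N → Mz N → ℂˣ) (i : Fin N) : tU χ :=
  RingQuot.mkAlgHom ℂ (URel χ) (gen (Gen.E i))

/-- `F̃_i` in `Ũ(χ)`. -/
noncomputable def elF {N : ℕ} (χ : Mz N → Mz N → ℂˣ) (i : Fin N) : tU χ :=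
  RingQuot.mkAlgHom ℂ (URel χ) (gen (Gen.F i))

/-- Iterated root vector `Ẽ⁺_{m,α_i,α_j}`. -/
noncomputable def Ep {N : ℕ} (χ : Mz N → Mz N → ℂˣ) (i j : Fin N) : ℕ → tU χ
  | 0 => elE χ j
  | (m + 1) => elE χ i * Ep χ i j m -
      ((χ (alphav i) (alphav i) : ℂ) ^ m * (χ (alphav i) (alphav j) : ℂ)) •
        (Ep χ i j m * elE χ i)

/-- Iterated root vector `F̃⁺_{m,α_i,α_j}`. -/
noncomputable def Fp {N : ℕ} (χ : Mz N → Mz N → ℂˣ) (i j : Fin N) : ℕ → tU χ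
  | 0 => elF χ j
  | (m + 1) => elF χ i * Fp χ i j m -
      ((χ (alphav i) (alphav i) : ℂ) ^ m * (χ (alphav j) (alphav i) : ℂ)) •
        (Fp χ i j m * elF χ i)

section Basic
variable {N : ℕ} {χ : Mz N → Mz N → ℂˣ}

lemma KK_rel (a b : Mz N) : elK χ a * elK χ b = elK χ (a + b) := by
  simpa [elK, map_mul] using RingQuot.mkAlgHom_rel ℂ (URel.KK (χ := χ) a b)

lemma LL_rel (a b : Mz N) : elL χ a * elL χ b = elL χ (a + b) := by
  simpa [elL, map_mul] using RingQuot.mkAlgHom_rel ℂ (URel.LL (χ := χ) a b)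

lemma KL_rel (a b : Mz N) : elK χ a * elL χ b = elL χ b * elK χ a := by
  simpa [elK, elL, map_mul] using RingQuot.mkAlgHom_rel ℂ (URel.KL (χ := χ) a b)

lemma KE_rel (a : Mz N) (i : Fin N) :
    elK χ a * elE χ i = (χ a (alphav i) : ℂ) • (elE χ i * elK χ a) := by
  simpa [elK, elE, map_mul, map_smul] using RingQuot.mkAlgHom_rel ℂ (URel.KE (χ := χ) a i)

lemma LE_rel (a : Mz N) (i : Fin N) :
    elL χ a * elE χ i = (χ (-alphav i) a : ℂ) • (elE χ i * elL χ a) := by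
  simpa [elL, elE, map_mul, map_smul] using RingQuot.mkAlgHom_rel ℂ (URel.LE (χ := χ) a i)

lemma KF_rel (a : Mz N) (i : Fin N) :
    elK χ a * elF χ i = (χ a (-alphav i) : ℂ) • (elF χ i * elK χ a) := by
  simpa [elK, elF, map_mul, map_smul] using RingQuot.mkAlgHom_rel ℂ (URel.KF (χ := χ) a i)

lemma LF_rel (a : Mz N) (i : Fin N) :
    elL χ a * elF χ i = (χ (alphav i) a : ℂ) • (elF χ i * elL χ a) := by
  simpa [elL, elF, map_mul, map_smul] using RingQuot.mkAlgHom_rel ℂ (URel.LF (χ := χ) a i)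

lemma EF_rel (i j : Fin N) :
    elE χ i * elF χ j - elF χ j * elE χ i =
      if i = j then -elK χ (alphav i) + elL χ (alphav i) else 0 := by
  have := RingQuot.mkAlgHom_rel ℂ (URel.EF (χ := χ) i j)
  simp only [map_sub, map_mul] at this
  rw [show (RingQuot.mkAlgHom ℂ (URel χ)) (if i = j then -gen (Gen.K (alphav i)) + gen (Gen.L (alphav i)) else 0)
      = if i = j then -elK χ (alphav i) + elL χ (alphav i) else 0 by
    split <;> simp [elK, elL, map_add, map_neg]] at this
  exact this

lemma EF_ne {i j : Fin N} (h : i ≠ j) : elE χ i * elF χ j = elF χ j * elE χ i := by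
  have := EF_rel (χ := χ) i j
  rw [if_neg h] at this
  exact sub_eq_zero.mp this

lemma EF_eq (i : Fin N) :
    elE χ i * elF χ i = elF χ i * elE χ i + (-elK χ (alphav i) + elL χ (alphav i)) := by
  have := EF_rel (χ := χ) i i
  rw [if_pos rfl] at this
  linear_combination (norm := noncomm_ring) this

/-! Bihom consequences -/

lemma bihom_zero_right (hχ : IsBihom χ) (a : Mz N) : χ a 0 = 1 := by
  have h := hχ.1 a 0 0
  rw [add_zero] at h
  have := mul_left_cancel (a := χ a 0) (h.symm.trans (mul_one _).symm)
  exact this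

lemma bihom_zero_left (hχ : IsBihom χ) (a : Mz N) : χ 0 a = 1 := by
  have h := hχ.2 0 0 a
  rw [add_zero] at h
  exact mul_left_cancel (a := χ 0 a) (h.symm.trans (mul_one _).symm)

lemma bihom_neg_right (hχ : IsBihom χ) (a b : Mz N) : χ a (-b) = (χ a b)⁻¹ := by
  have h := hχ.1 a b (-b)
  rw [add_neg_cancel, bihom_zero_right hχ] at h
  exact eq_inv_of_mul_eq_one_right h.symm

lemma bihom_neg_left (hχ : IsBihom χ) (a b : Mz N) : χ (-a) b = (χ a b)⁻¹ := by
  have h := hχ.2 a (-a) b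
  rw [add_neg_cancel, bihom_zero_left hχ] at h
  exact (inv_eq_of_mul_eq_one_right h.symm).symm

end Basic

section Words
variable {N : ℕ} {χ : Mz N → Mz N → ℂˣ}

/-- degree of `Ep m` / `Fp m`. -/
noncomputable def bv (i j : Fin N) (m : ℕ) : Mz N := (m : ℤ) • alphav i + alphav j

lemma bv_zero (i j : Fin N) : bv i j 0 = alphav j := by simp [bv]

lemma bv_succ (i j : Fin N) (m : ℕ) : bv i j (m + 1) = bv i j m + alphav i := by
  simp only [bv]
  push_cast
  rw [add_smul, one_smul]
  abel

/-- `k` quasi-commutes with `x` with factor `c`. -/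
def QC {A : Type*} [Ring A] [Module ℂ A] (k : A) (c : ℂ) (x : A) : Prop := k * x = c • (x * k)

variable {A : Type*} [Ring A] [Algebra ℂ A] {k x y : A} {c d : ℂ}

lemma QC.mul (h1 : QC k c x) (h2 : QC k d y) : QC k (c * d) (x * y) := by
  unfold QC at *
  rw [← mul_assoc, h1, smul_mul_assoc, mul_assoc, h2, mul_smul_comm, smul_smul, mul_assoc]

lemma QC.smul (s : ℂ) (h : QC k c x) : QC k c (s • x) := by
  unfold QC at *
  rw [mul_smul_comm, h, smul_mul_assoc, smul_comm]

lemma QC.sub (h1 : QC k c x) (h2 : QC k c y) : QC k c (x - y) := by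
  unfold QC at *
  rw [mul_sub, sub_mul, smul_sub, h1, h2]

lemma QC.swap (h : QC k c x) (hc : c ≠ 0) : x * k = c⁻¹ • (k * x) := by
  rw [h, smul_smul, inv_mul_cancel₀ hc, one_smul]

variable (i j : Fin N)

lemma chiC_add_right (hχ : IsBihom χ) (a b c : Mz N) : (χ a (b + c) : ℂ) = (χ a b : ℂ) * (χ a c : ℂ) := by
  rw [hχ.1 a b c]; rfl

lemma chiC_add_left (hχ : IsBihom χ) (a b c : Mz N) : (χ (a + b) c : ℂ) = (χ a c : ℂ) * (χ b c : ℂ) := by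
  rw [hχ.2 a b c]; rfl

lemma chi_ne (a b : Mz N) : (χ a b : ℂ) ≠ 0 := Units.ne_zero _

lemma chi_i_bv (hχ : IsBihom χ) (m : ℕ) : (χ (alphav i) (bv i j m) : ℂ) =
    (χ (alphav i) (alphav i) : ℂ) ^ m * (χ (alphav i) (alphav j) : ℂ) := by
  induction m with
  | zero => simp [bv_zero]
  | succ m ih => rw [bv_succ, chiC_add_right hχ, ih, pow_succ]; ring

lemma chi_bv_i (hχ : IsBihom χ) (m : ℕ) : (χ (bv i j m) (alphav i) : ℂ) =
    (χ (alphav i) (alphav i) : ℂ) ^ m * (χ (alphav j) (alphav i) : ℂ) := by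
  induction m with
  | zero => simp [bv_zero]
  | succ m ih => rw [bv_succ, chiC_add_left hχ, ih, pow_succ]; ring

lemma K_Ep (hχ : IsBihom χ) (a : Mz N) (m : ℕ) :
    QC (elK χ a) ((χ a (bv i j m) : ℂ)) (Ep χ i j m) := by
  induction m with
  | zero => rw [bv_zero]; exact KE_rel a j
  | succ m ih =>
      rw [bv_succ, chiC_add_right hχ]
      show QC _ _ (elE χ i * Ep χ i j m - _ • (Ep χ i j m * elE χ i))
      exact QC.sub (by rw [mul_comm]; exact QC.mul (KE_rel a i) ih)
        (QC.smul _ (by exact QC.mul ih (KE_rel a i)))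

lemma L_Ep (hχ : IsBihom χ) (a : Mz N) (m : ℕ) :
    QC (elL χ a) ((χ (bv i j m) a : ℂ))⁻¹ (Ep χ i j m) := by
  induction m with
  | zero =>
      have := LE_rel (χ := χ) a j
      rw [bihom_neg_left hχ] at this
      rw [bv_zero]
      exact (by simpa [QC] using this : QC _ _ _)
  | succ m ih =>
      rw [bv_succ, chiC_add_left hχ, mul_inv]
      have hE : QC (elL χ a) ((χ (alphav i) a : ℂ))⁻¹ (elE χ i) := by
        have := LE_rel (χ := χ) a i
        rw [bihom_neg_left hχ] at this
        simpa [QC] using this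
      show QC _ _ (elE χ i * Ep χ i j m - _ • (Ep χ i j m * elE χ i))
      exact QC.sub (by rw [mul_comm]; exact hE.mul ih) (QC.smul _ (ih.mul hE))

lemma K_Fp (hχ : IsBihom χ) (a : Mz N) (m : ℕ) :
    QC (elK χ a) ((χ a (bv i j m) : ℂ))⁻¹ (Fp χ i j m) := by
  have hF : ∀ i' : Fin N, QC (elK χ a) ((χ a (alphav i') : ℂ))⁻¹ (elF χ i') := by
    intro i'
    have := KF_rel (χ := χ) a i'
    rw [bihom_neg_right hχ] at this
    simpa [QC] using this
  induction m with
  | zero => rw [bv_zero]; exact hF j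
  | succ m ih =>
      rw [bv_succ, chiC_add_right hχ, mul_inv]
      show QC _ _ (elF χ i * Fp χ i j m - _ • (Fp χ i j m * elF χ i))
      exact QC.sub (by rw [mul_comm]; exact (hF i).mul ih) (QC.smul _ (ih.mul (hF i)))

lemma L_Fp (hχ : IsBihom χ) (a : Mz N) (m : ℕ) :
    QC (elL χ a) ((χ (bv i j m) a : ℂ)) (Fp χ i j m) := by
  induction m with
  | zero => rw [bv_zero]; exact LF_rel a j
  | succ m ih =>
      rw [bv_succ, chiC_add_left hχ]
      show QC _ _ (elF χ i * Fp χ i j m - _ • (Fp χ i j m * elF χ i))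
      exact QC.sub (by rw [mul_comm]; exact QC.mul (LF_rel a i) ih)
        (QC.smul _ (QC.mul ih (LF_rel a i)))

end Words

section Scalars

/-- coefficient in `[E_i, F⁺_m]`. -/
noncomputable def ca (q l r : ℂ) : ℕ → ℂ
  | 0 => 0
  | (m + 1) => ca q l r m + q ^ m * r - (q ^ m * l)⁻¹

/-- coefficient in `[E⁺_m, F_i]`. -/
noncomputable def cb (q l r : ℂ) : ℕ → ℂ
  | 0 => 0
  | (m + 1) => cb q l r m + (q ^ m * r)⁻¹ - q ^ m * l

/-- coefficient in `[E⁺_m, F⁺_m]`. -/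
noncomputable def cc (q l r : ℂ) (m : ℕ) : ℂ := qfact m q * tfact m q (l * r)

lemma qnum_succ (m : ℕ) (t : ℂ) : qnum (m + 1) t = qnum m t + t ^ m :=
  Finset.sum_range_succ _ _

lemma qnum_succ' (m : ℕ) (t : ℂ) : qnum (m + 1) t = 1 + t * qnum m t := by
  rw [qnum, Finset.sum_range_succ']
  simp [qnum, Finset.mul_sum, pow_succ, add_comm, mul_comm]

lemma cc_zero (q l r : ℂ) : cc q l r 0 = 1 := by simp [cc, qfact, tfact]

lemma cc_succ (q l r : ℂ) (m : ℕ) :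
    cc q l r (m + 1) = cc q l r m * (qnum (m + 1) q * (1 - q ^ m * (l * r))) := by
  rw [cc, cc, qfact, qfact, tfact, tfact, Finset.prod_range_succ, Finset.prod_range_succ]
  ring

variable {q l r : ℂ} (hq : q ≠ 0) (hl : l ≠ 0) (hr : r ≠ 0)

lemma cc_one (q l r : ℂ) : cc q l r 1 = 1 - l * r := by
  rw [show (1:ℕ) = 0 + 1 from rfl, cc_succ, cc_zero]
  simp [qnum]

lemma Id_a (hq : q ≠ 0) (hl : l ≠ 0) (m : ℕ) :
    ca q l r m * (q ^ m * l) = (l * r * q ^ m - q) * qnum m q := by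
  induction m with
  | zero => simp [ca, qnum]
  | succ m ih =>
      rw [ca, qnum_succ]
      have h : (q ^ m * l)⁻¹ * (q ^ (m + 1) * l) = q := by
        field_simp
        ring
      have h2 : qnum (m + 1) q = 1 + q * qnum m q := qnum_succ' m q
      calc (ca q l r m + q ^ m * r - (q ^ m * l)⁻¹) * (q ^ (m + 1) * l)
          = (ca q l r m * (q ^ m * l)) * q + q ^ m * r * (q ^ (m + 1) * l)
            - (q ^ m * l)⁻¹ * (q ^ (m + 1) * l) := by ring
        _ = (l * r * q ^ m - q) * qnum m q * q + q ^ m * r * (q ^ (m + 1) * l) - q := by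
            rw [ih, h]
        _ = (l * r * q ^ (m + 1) - q) * (qnum m q + q ^ m) := by
            have h3 : qnum m q + q ^ m = 1 + q * qnum m q :=
              (qnum_succ m q).symm.trans (qnum_succ' m q)
            linear_combination q * h3

lemma Id_b (hq : q ≠ 0) (hr : r ≠ 0) (m : ℕ) :
    cb q l r m * (q ^ m * r) = (q - l * r * q ^ m) * qnum m q := by
  induction m with
  | zero => simp [cb, qnum]
  | succ m ih =>
      rw [cb, qnum_succ]
      have h : (q ^ m * r)⁻¹ * (q ^ (m + 1) * r) = q := by
        field_simp
        ring
      have h3 : qnum m q + q ^ m = 1 + q * qnum m q :=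
        (qnum_succ m q).symm.trans (qnum_succ' m q)
      calc (cb q l r m + (q ^ m * r)⁻¹ - q ^ m * l) * (q ^ (m + 1) * r)
          = (cb q l r m * (q ^ m * r)) * q + (q ^ m * r)⁻¹ * (q ^ (m + 1) * r)
            - q ^ m * l * (q ^ (m + 1) * r) := by ring
        _ = (q - l * r * q ^ m) * qnum m q * q + q - q ^ m * l * (q ^ (m + 1) * r) := by
            rw [ih, h]
        _ = (q - l * r * q ^ (m + 1)) * (qnum m q + q ^ m) := by
            linear_combination (-q) * h3

lemma Id_c (hq : q ≠ 0) (hr : r ≠ 0) (m : ℕ) :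
    cc q l r (m + 1) = cb q l r (m + 1) * (q ^ m * r) * cc q l r m := by
  have h1 : cb q l r (m + 1) * (q ^ m * r) * q = (q - l * r * q ^ (m + 1)) * qnum (m + 1) q := by
    have h := Id_b (q := q) (l := l) (r := r) hq hr (m + 1)
    linear_combination h
  apply mul_left_cancel₀ hq
  rw [cc_succ]
  linear_combination (-(cc q l r m)) * h1

lemma Id_w (hq : q ≠ 0) (hl : l ≠ 0) (m : ℕ) :
    -cc q l r (m + 2) = cc q l r (m + 1) * (q ^ (2 * m + 2) * (l * r) - 1)
      + ca q l r (m + 1) * (q ^ (m + 1) * l) * cc q l r (m + 1) := by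
  have ha := Id_a (q := q) (l := l) (r := r) hq hl (m + 1)
  rw [ha, cc_succ q l r (m + 1)]
  have h3 : qnum (m + 1) q + q ^ (m + 1) = qnum (m + 2) q := (qnum_succ (m + 1) q).symm
  have h4 : qnum (m + 2) q = 1 + q * qnum (m + 1) q := qnum_succ' (m + 1) q
  linear_combination (-(cc q l r (m + 1)) * (q ^ (m + 1) * (l * r))) * h3
    - cc q l r (m + 1) * h4

end Scalars

section Push
variable {A : Type*} [Ring A] [Algebra ℂ A] {a b t : A} {s : ℂ}

lemma push_smul (h : a * b = s • (b * a)) (x : A) : a * (b * x) = s • (b * (a * x)) := by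
  rw [← mul_assoc, h, smul_mul_assoc, mul_assoc]

lemma push_add (h : a * b = b * a + t) (x : A) : a * (b * x) = b * (a * x) + t * x := by
  rw [← mul_assoc, h, add_mul, mul_assoc]

lemma push_comm (h : a * b = b * a) (x : A) : a * (b * x) = b * (a * x) := by
  rw [← mul_assoc, h, mul_assoc]

end Push

section Comms
variable {N : ℕ} {χ : Mz N → Mz N → ℂˣ}

lemma tU_neg_mul (a b : tU χ) : (-a) * b = -(a * b) := neg_mul a b
lemma tU_mul_neg (a b : tU χ) : a * (-b) = -(a * b) := mul_neg a b
lemma tU_smul_neg (c : ℂ) (a : tU χ) : c • (-a) = -(c • a) := smul_neg c a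
lemma tU_neg_neg (a : tU χ) : -(-a) = a := neg_neg a

lemma Fp_succ_def (i j : Fin N) (m : ℕ) : Fp χ i j (m + 1) =
    elF χ i * Fp χ i j m -
      ((χ (alphav i) (alphav i) : ℂ) ^ m * (χ (alphav j) (alphav i) : ℂ)) •
        (Fp χ i j m * elF χ i) := rfl

lemma Ep_succ_def (i j : Fin N) (m : ℕ) : Ep χ i j (m + 1) =
    elE χ i * Ep χ i j m -
      ((χ (alphav i) (alphav i) : ℂ) ^ m * (χ (alphav i) (alphav j) : ℂ)) •
        (Ep χ i j m * elE χ i) := rfl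

/-- `[Ẽ_i, F̃⁺_{m+1}] = a_{m+1} F̃⁺_m K̃_i`. -/
lemma Xs (hχ : IsBihom χ) {i j : Fin N} (hij : i ≠ j) (m : ℕ) :
    elE χ i * Fp χ i j (m + 1) = Fp χ i j (m + 1) * elE χ i +
      ca (χ (alphav i) (alphav i) : ℂ) (χ (alphav i) (alphav j) : ℂ)
          (χ (alphav j) (alphav i) : ℂ) (m + 1) •
        (Fp χ i j m * elK χ (alphav i)) := by
  set q : ℂ := (χ (alphav i) (alphav i) : ℂ) with hqdef
  set l : ℂ := (χ (alphav i) (alphav j) : ℂ) with hldef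
  set r : ℂ := (χ (alphav j) (alphav i) : ℂ) with hrdef
  have hq : q ≠ 0 := chi_ne _ _
  have hl : l ≠ 0 := chi_ne _ _
  have hr : r ≠ 0 := chi_ne _ _
  have hEF : elE χ i * elF χ i = elF χ i * elE χ i + (-elK χ (alphav i) + elL χ (alphav i)) :=
    EF_eq i
  -- K_i past F_i, L_i past F_i:
  have hKF : elK χ (alphav i) * elF χ i = q⁻¹ • (elF χ i * elK χ (alphav i)) := by
    have := KF_rel (χ := χ) (alphav i) i
    rw [bihom_neg_right hχ] at this
    simpa using this
  -- K_i and L_i past Fp m: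
  have hKFp : ∀ n, elK χ (alphav i) * Fp χ i j n = (q ^ n * l)⁻¹ • (Fp χ i j n * elK χ (alphav i)) := by
    intro n
    have := K_Fp i j hχ (alphav i) n
    rwa [QC, chi_i_bv i j hχ n] at this
  have hLFp : ∀ n, elL χ (alphav i) * Fp χ i j n = (q ^ n * r) • (Fp χ i j n * elL χ (alphav i)) := by
    intro n
    have := L_Fp i j hχ (alphav i) n
    rwa [QC, chi_bv_i i j hχ n] at this
  induction m with
  | zero =>
      have hEFj : elE χ i * elF χ j = elF χ j * elE χ i := EF_ne hij
      have hKFj : elK χ (alphav i) * elF χ j = l⁻¹ • (elF χ j * elK χ (alphav i)) := by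
        have := KF_rel (χ := χ) (alphav i) j
        rw [bihom_neg_right hχ] at this
        simpa using this
      have hLFj : elL χ (alphav i) * elF χ j = r • (elF χ j * elL χ (alphav i)) :=
        LF_rel (alphav i) j
      rw [Fp_succ_def]
      simp only [Fp, ca, pow_zero, one_mul, mul_one]
      simp only [mul_sub, sub_mul, mul_smul_comm, smul_mul_assoc,
        push_add hEF, push_comm hEFj, hEF, hEFj, hKFj, hLFj,
        add_mul, mul_add, tU_neg_mul, tU_mul_neg, tU_smul_neg, tU_neg_neg, smul_smul, smul_sub, smul_add, mul_assoc]
      simp only [mul_sub, sub_mul, mul_smul_comm, smul_mul_assoc,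
        push_add hEF, push_comm hEFj, hEF, hEFj, hKFj, hLFj,
        add_mul, mul_add, tU_neg_mul, tU_mul_neg, tU_smul_neg, tU_neg_neg, smul_smul, smul_sub, smul_add, mul_assoc,
        ← hqdef, ← hldef, ← hrdef]
      match_scalars <;> field_simp <;> ring
  | succ m ih =>
      rw [Fp_succ_def i j (m+1), show ca q l r (m + 1 + 1) =
        ca q l r (m + 1) + q ^ (m+1) * r - (q ^ (m+1) * l)⁻¹ from rfl]
      simp only [mul_sub, sub_mul, mul_smul_comm, smul_mul_assoc,
        push_add hEF, push_add ih, hEF, ih, push_smul (hKFp (m+1)), push_smul (hLFp (m+1)),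
        hKFp, hLFp, push_smul hKF, hKF,
        add_mul, mul_add, tU_neg_mul, tU_mul_neg, tU_smul_neg, tU_neg_neg, smul_smul, smul_sub, smul_add, mul_assoc]
      simp only [Fp_succ_def i j m, mul_sub, sub_mul, mul_smul_comm, smul_mul_assoc,
        push_add hEF, push_add ih, hEF, ih, push_smul (hKFp (m+1)), push_smul (hLFp (m+1)),
        hKFp, hLFp, push_smul hKF, hKF,
        add_mul, mul_add, tU_neg_mul, tU_mul_neg, tU_smul_neg, tU_neg_neg, smul_smul, smul_sub, smul_add, mul_assoc,
        ← hqdef, ← hldef, ← hrdef]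
      match_scalars <;> field_simp <;> ring

end Comms

section Ys
variable {N : ℕ} {χ : Mz N → Mz N → ℂˣ}

/-- `[Ẽ⁺_{m+1}, F̃_i] = b_{m+1} Ẽ⁺_m L̃_i`. -/
lemma Ys (hχ : IsBihom χ) {i j : Fin N} (hij : i ≠ j) (m : ℕ) :
    Ep χ i j (m + 1) * elF χ i = elF χ i * Ep χ i j (m + 1) +
      cb (χ (alphav i) (alphav i) : ℂ) (χ (alphav i) (alphav j) : ℂ)
          (χ (alphav j) (alphav i) : ℂ) (m + 1) •
        (Ep χ i j m * elL χ (alphav i)) := by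
  set q : ℂ := (χ (alphav i) (alphav i) : ℂ) with hqdef
  set l : ℂ := (χ (alphav i) (alphav j) : ℂ) with hldef
  set r : ℂ := (χ (alphav j) (alphav i) : ℂ) with hrdef
  have hq : q ≠ 0 := chi_ne _ _
  have hl : l ≠ 0 := chi_ne _ _
  have hr : r ≠ 0 := chi_ne _ _
  have hEF : elE χ i * elF χ i = elF χ i * elE χ i + (-elK χ (alphav i) + elL χ (alphav i)) :=
    EF_eq i
  have hLE : elL χ (alphav i) * elE χ i = q⁻¹ • (elE χ i * elL χ (alphav i)) := by
    have := LE_rel (χ := χ) (alphav i) i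
    rw [bihom_neg_left hχ] at this
    simpa using this
  have hKEp : ∀ n, elK χ (alphav i) * Ep χ i j n = (q ^ n * l) • (Ep χ i j n * elK χ (alphav i)) := by
    intro n
    have := K_Ep i j hχ (alphav i) n
    rwa [QC, chi_i_bv i j hχ n] at this
  have hLEp : ∀ n, elL χ (alphav i) * Ep χ i j n = (q ^ n * r)⁻¹ • (Ep χ i j n * elL χ (alphav i)) := by
    intro n
    have := L_Ep i j hχ (alphav i) n
    rwa [QC, chi_bv_i i j hχ n] at this
  induction m with
  | zero =>
      have hEjF : elE χ j * elF χ i = elF χ i * elE χ j := EF_ne (Ne.symm hij)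
      have hKEj : elK χ (alphav i) * elE χ j = l • (elE χ j * elK χ (alphav i)) :=
        KE_rel (alphav i) j
      have hLEj : elL χ (alphav i) * elE χ j = r⁻¹ • (elE χ j * elL χ (alphav i)) := by
        have := LE_rel (χ := χ) (alphav i) j
        rw [bihom_neg_left hχ] at this
        simpa using this
      rw [Ep_succ_def]
      simp only [Ep, cb, pow_zero, one_mul, mul_one]
      simp only [mul_sub, sub_mul, mul_smul_comm, smul_mul_assoc,
        push_add hEF, push_comm hEjF, hEF, hEjF, hKEj, hLEj, hLE, push_smul hLE,
        add_mul, mul_add, tU_neg_mul, tU_mul_neg, tU_smul_neg, tU_neg_neg,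
        smul_smul, smul_sub, smul_add, mul_assoc]
      simp only [mul_sub, sub_mul, mul_smul_comm, smul_mul_assoc,
        push_add hEF, push_comm hEjF, hEF, hEjF, hKEj, hLEj, hLE, push_smul hLE,
        add_mul, mul_add, tU_neg_mul, tU_mul_neg, tU_smul_neg, tU_neg_neg,
        smul_smul, smul_sub, smul_add, mul_assoc,
        ← hqdef, ← hldef, ← hrdef]
      match_scalars <;> field_simp <;> ring
  | succ m ih =>
      rw [Ep_succ_def i j (m+1), show cb q l r (m + 1 + 1) =
        cb q l r (m + 1) + (q ^ (m+1) * r)⁻¹ - q ^ (m+1) * l from rfl]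
      simp only [mul_sub, sub_mul, mul_smul_comm, smul_mul_assoc,
        push_add hEF, push_add ih, hEF, ih, push_smul (hKEp (m+1)), push_smul (hLEp (m+1)),
        hKEp, hLEp, push_smul hLE, hLE,
        add_mul, mul_add, tU_neg_mul, tU_mul_neg, tU_smul_neg, tU_neg_neg,
        smul_smul, smul_sub, smul_add, mul_assoc]
      simp only [Ep_succ_def i j m, mul_sub, sub_mul, mul_smul_comm, smul_mul_assoc,
        push_add hEF, push_add ih, hEF, ih, push_smul (hKEp (m+1)), push_smul (hLEp (m+1)),
        hKEp, hLEp, push_smul hLE, hLE,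
        add_mul, mul_add, tU_neg_mul, tU_mul_neg, tU_smul_neg, tU_neg_neg,
        smul_smul, smul_sub, smul_add, mul_assoc,
        ← hqdef, ← hldef, ← hrdef]
      match_scalars <;> field_simp <;> ring

end Ys

section CW
variable {N : ℕ} {χ : Mz N → Mz N → ℂˣ}

/-- Main mutual induction: `[E⁺_m, F⁺_m]` and `[E⁺_{m+1}, F⁺_m]`. -/
lemma CW (hχ : IsBihom χ) {i j : Fin N} (hij : i ≠ j) (m : ℕ) :
    (Ep χ i j m * Fp χ i j m = Fp χ i j m * Ep χ i j m +
      cc (χ (alphav i) (alphav i) : ℂ) (χ (alphav i) (alphav j) : ℂ)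
          (χ (alphav j) (alphav i) : ℂ) m •
        (-elK χ (bv i j m) + elL χ (bv i j m))) ∧
    (Ep χ i j (m + 1) * Fp χ i j m = Fp χ i j m * Ep χ i j (m + 1) +
      (-(cc (χ (alphav i) (alphav i) : ℂ) (χ (alphav i) (alphav j) : ℂ)
          (χ (alphav j) (alphav i) : ℂ) (m + 1))) •
        (elE χ i * elK χ (bv i j m))) := by
  set q : ℂ := (χ (alphav i) (alphav i) : ℂ) with hqdef
  set l : ℂ := (χ (alphav i) (alphav j) : ℂ) with hldef
  set r : ℂ := (χ (alphav j) (alphav i) : ℂ) with hrdef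
  have hq : q ≠ 0 := chi_ne _ _
  have hl : l ≠ 0 := chi_ne _ _
  have hr : r ≠ 0 := chi_ne _ _
  have hEF : elE χ i * elF χ i = elF χ i * elE χ i + (-elK χ (alphav i) + elL χ (alphav i)) :=
    EF_eq i
  induction m with
  | zero =>
      constructor
      · simp only [Ep, Fp, bv_zero, cc_zero, one_smul]
        exact EF_eq j
      · have hEFj : elE χ i * elF χ j = elF χ j * elE χ i := EF_ne hij
        have hEjFj : elE χ j * elF χ j =
            elF χ j * elE χ j + (-elK χ (alphav j) + elL χ (alphav j)) := EF_eq j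
        have hKjE : elK χ (alphav j) * elE χ i = r • (elE χ i * elK χ (alphav j)) :=
          KE_rel (alphav j) i
        have hLjE : elL χ (alphav j) * elE χ i = l⁻¹ • (elE χ i * elL χ (alphav j)) := by
          have := LE_rel (χ := χ) (alphav j) i
          rw [bihom_neg_left hχ] at this
          simpa using this
        rw [Ep_succ_def, bv_zero, cc_one]
        simp only [Ep, Fp, pow_zero, one_mul]
        simp only [mul_sub, sub_mul, mul_smul_comm, smul_mul_assoc,
          push_add hEjFj, push_comm hEFj, hEjFj, hEFj, hKjE, hLjE,
          add_mul, mul_add, tU_neg_mul, tU_mul_neg, tU_smul_neg, tU_neg_neg,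
          smul_smul, smul_sub, smul_add, mul_assoc]
        simp only [mul_sub, sub_mul, mul_smul_comm, smul_mul_assoc,
          push_add hEjFj, push_comm hEFj, hEjFj, hEFj, hKjE, hLjE,
          add_mul, mul_add, tU_neg_mul, tU_mul_neg, tU_smul_neg, tU_neg_neg,
          smul_smul, smul_sub, smul_add, mul_assoc, ← hqdef, ← hldef, ← hrdef]
        match_scalars <;> field_simp <;> ring
  | succ m ih =>
      obtain ⟨hC, hW⟩ := ih
      have hcc : cc q l r (m + 1) = cb q l r (m + 1) * (q ^ m * r) * cc q l r m :=
        Id_c hq hr m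
      have hYs := Ys hχ hij m
      rw [← hqdef, ← hldef, ← hrdef] at hYs
      have hXs := Xs hχ hij m
      rw [← hqdef, ← hldef, ← hrdef] at hXs
      -- commutations with K/L of weight bv m, bv (m+1), alphav i
      have hLFpm : elL χ (alphav i) * Fp χ i j m =
          (q ^ m * r) • (Fp χ i j m * elL χ (alphav i)) := by
        have := L_Fp i j hχ (alphav i) m
        rwa [QC, chi_bv_i i j hχ m] at this
      have hKbvF : elK χ (bv i j m) * elF χ i =
          (q ^ m * r)⁻¹ • (elF χ i * elK χ (bv i j m)) := by
        have := KF_rel (χ := χ) (bv i j m) i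
        rw [bihom_neg_right hχ] at this
        simp only [Units.val_inv_eq_inv_val] at this
        rwa [chi_bv_i i j hχ m] at this
      have hKK : elK χ (alphav i) * elK χ (bv i j m) = elK χ (bv i j (m + 1)) := by
        rw [KK_rel, bv_succ, add_comm]
      have hKKi : elK χ (bv i j m) * elK χ (alphav i) = elK χ (bv i j (m + 1)) := by
        rw [KK_rel, bv_succ]
      have hLL : elL χ (bv i j m) * elL χ (alphav i) = elL χ (bv i j (m + 1)) := by
        rw [LL_rel, bv_succ]
      have hKLmix : elK χ (bv i j m) * elL χ (alphav i) =
          elL χ (alphav i) * elK χ (bv i j m) := KL_rel _ _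
      have hKLmix2 : elK χ (alphav i) * elL χ (bv i j m) =
          elL χ (bv i j m) * elK χ (alphav i) := KL_rel _ _
      have hCs : Ep χ i j (m + 1) * Fp χ i j (m + 1) = Fp χ i j (m + 1) * Ep χ i j (m + 1) +
          cc q l r (m + 1) • (-elK χ (bv i j (m + 1)) + elL χ (bv i j (m + 1))) := by
        rw [hcc] at hW ⊢
        simp only [Fp_succ_def i j m]
        simp only [mul_sub, sub_mul, mul_smul_comm, smul_mul_assoc,
          push_add hYs, push_add hW, push_add hC, push_add hEF, hYs, hW, hC, hEF,
          push_smul hLFpm, hLFpm, push_smul hKbvF, hKbvF, hKK, hKKi, hLL, hKLmix, hKLmix2,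
          add_mul, mul_add, tU_neg_mul, tU_mul_neg, tU_smul_neg, tU_neg_neg,
          smul_smul, smul_sub, smul_add, mul_assoc]
        simp only [mul_sub, sub_mul, mul_smul_comm, smul_mul_assoc,
          push_add hYs, push_add hW, push_add hC, push_add hEF, hYs, hW, hC, hEF,
          push_smul hLFpm, hLFpm, push_smul hKbvF, hKbvF, hKK, hKKi, hLL, hKLmix, hKLmix2,
          add_mul, mul_add, tU_neg_mul, tU_mul_neg, tU_smul_neg, tU_neg_neg,
          smul_smul, smul_sub, smul_add, mul_assoc, ← hqdef, ← hldef, ← hrdef]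
        match_scalars <;> field_simp <;> ring
      refine ⟨hCs, ?_⟩
      -- now the W part at m+1
      have hKEp1 : elK χ (alphav i) * Ep χ i j (m + 1) =
          (q ^ (m + 1) * l) • (Ep χ i j (m + 1) * elK χ (alphav i)) := by
        have := K_Ep i j hχ (alphav i) (m + 1)
        rwa [QC, chi_i_bv i j hχ (m + 1)] at this
      have hKbvE : elK χ (bv i j (m + 1)) * elE χ i =
          (q ^ (m + 1) * r) • (elE χ i * elK χ (bv i j (m + 1))) := by
        have := KE_rel (χ := χ) (bv i j (m + 1)) i
        rwa [chi_bv_i i j hχ (m + 1)] at this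
      have hLbvE : elL χ (bv i j (m + 1)) * elE χ i =
          (q ^ (m + 1) * l)⁻¹ • (elE χ i * elL χ (bv i j (m + 1))) := by
        have := LE_rel (χ := χ) (bv i j (m + 1)) i
        rw [bihom_neg_left hχ] at this
        simp only [Units.val_inv_eq_inv_val] at this
        rwa [chi_i_bv i j hχ (m + 1)] at this
      have hIdw : -cc q l r (m + 1 + 1) = cc q l r (m + 1) * (q ^ (2 * m + 2) * (l * r) - 1)
          + ca q l r (m + 1) * (q ^ (m + 1) * l) * cc q l r (m + 1) := Id_w hq hl m
      rw [hIdw]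
      simp only [Ep_succ_def i j (m + 1)]
      simp only [mul_sub, sub_mul, mul_smul_comm, smul_mul_assoc,
        push_add hCs, push_add hXs, push_add hW, hCs, hXs, hW, hEF, push_add hEF,
        push_smul hKEp1, hKEp1, push_smul hKbvE, hKbvE, push_smul hLbvE, hLbvE,
        hKK, hKKi, hLL, hKLmix, hKLmix2,
        add_mul, mul_add, tU_neg_mul, tU_mul_neg, tU_smul_neg, tU_neg_neg,
        smul_smul, smul_sub, smul_add, mul_assoc]
      simp only [mul_sub, sub_mul, mul_smul_comm, smul_mul_assoc,
        push_add hCs, push_add hXs, push_add hW, hCs, hXs, hW, hEF, push_add hEF,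
        push_smul hKEp1, hKEp1, push_smul hKbvE, hKbvE, push_smul hLbvE, hLbvE,
        hKK, hKKi, hLL, hKLmix, hKLmix2,
        add_mul, mul_add, tU_neg_mul, tU_mul_neg, tU_smul_neg, tU_neg_neg,
        smul_smul, smul_sub, smul_add, mul_assoc, ← hqdef, ← hldef, ← hrdef]
      match_scalars <;> field_simp <;> ring

end CW


/-- In U~(chi): [E+_{m,a_i,a_j}, F+_{m,a_i,a_j}] = (m)_{q_ii}! (m; q_ii, q_ij q_ji)! (-K_{m a_i + a_j} + L_{m a_i + a_j}). -/
theorem commutator_Ep_Fp {N : ℕ} (χ : Mz N → Mz N → ℂˣ) (hχ : IsBihom χ)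
    (i j : Fin N) (hij : i ≠ j) (m : ℕ) :
    Ep χ i j m * Fp χ i j m - Fp χ i j m * Ep χ i j m =
      (qfact m (χ (alphav i) (alphav i)) *
        tfact m (χ (alphav i) (alphav i))
          ((χ (alphav i) (alphav j) : ℂ) * (χ (alphav j) (alphav i) : ℂ))) •
        (-elK χ ((m : ℤ) • alphav i + alphav j) + elL χ ((m : ℤ) • alphav i + alphav j)) := by
  have h := (CW hχ hij m).1
  rw [h, add_sub_cancel_left]
  rfl
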